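/- Let k be an even integer. Then the union over all (usual) primes p of the sets S_k(p,0) = { n ⊙_k p : n ∈ ℤ } equals ℤ \ {-1, 1}. -/

import Mathlib

def odot (k m n : ℤ) : ℤ := (m - n + 1) * n + n * (n - 1) * k / 2

theorem stmt_12 (k : ℤ) (hk : Even k) :
    {x : ℤ | ∃ p : ℕ, p.Prime ∧ ∃ n : ℤ, odot k n (p : ℤ) = x} =
      {x : ℤ | x ≠ -1 ∧ x ≠ 1} := by
  obtain ⟨j, hj⟩ := hk
  have key : ∀ (n p : ℤ), odot k n p = (n - p + 1 + (p - 1) * j) * p := by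
    intro n p
    unfold odot
    have h : p * (p - 1) * k = 2 * (p * (p - 1) * j) := by rw [hj]; ring
    rw [h, Int.mul_ediv_cancel_left _ (by norm_num)]
    ring
  ext x
  simp only [Set.mem_setOf_eq]
  constructor
  · rintro ⟨p, hp, n, hn⟩
    have hdvd : (p : ℤ) ∣ x := ⟨n - p + 1 + ((p : ℤ) - 1) * j, by rw [← hn, key]; ring⟩
    have h2 : 2 ≤ (p : ℤ) := by exact_mod_cast hp.two_le
    constructor
    · rintro rfl
      have : (p : ℤ) ∣ 1 := (dvd_neg.mp hdvd)
      have := Int.le_of_dvd one_pos this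
      omega
    · rintro rfl
      have := Int.le_of_dvd one_pos hdvd
      omega
  · rintro ⟨h1, h2⟩
    by_cases hx : x = 0
    · refine ⟨2, Nat.prime_two, 1 - j, ?_⟩
      rw [key]; subst hx; push_cast; ring
    · have hna : x.natAbs ≠ 1 := by omega
      set p := x.natAbs.minFac with hp
      have hpp : p.Prime := Nat.minFac_prime hna
      have hdvd : (p : ℤ) ∣ x :=
        (Int.natCast_dvd_natCast.mpr (Nat.minFac_dvd _)).trans (Int.natAbs_dvd.mpr dvd_rfl)
      obtain ⟨m, hm⟩ := hdvd
      refine ⟨p, hpp, m + p - 1 - ((p : ℤ) - 1) * j, ?_⟩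
      rw [key, hm]; ring
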